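/- Let L/K be a finite Galois extension of complete discretely valued fields with separable residue extension of characteristic p. Then G_0/G_1 is a cyclic group of order prime to p (where if p = 0 this means G_1 is trivial and G_0 is cyclic). -/

import Mathlib

open Classical Polynomial

/-- The distance `dist x y = exp (-v (x - y))` attached to a discrete valuation `v`
(with the convention `dist x x = 0`). -/
noncomputable def vdist {L : Type*} [Field L] (v : L → ℤ) (x y : L) : ℝ :=
  if x = y then 0 else Real.exp (-(v (x - y) : ℝ))

/-- Completeness of a discretely valued field: every Cauchy sequence for the
valuation metric converges. -/
def VComplete {L : Type*} [Field L] (v : L → ℤ) : Prop :=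
  ∀ a : ℕ → L,
    (∀ ε : ℝ, 0 < ε → ∃ N : ℕ, ∀ m n : ℕ, N ≤ m → N ≤ n → vdist v (a m) (a n) < ε) →
    ∃ l : L, ∀ ε : ℝ, 0 < ε → ∃ N : ℕ, ∀ n : ℕ, N ≤ n → vdist v (a n) l < ε

/-- Membership in the valuation ring `{x : v x ≥ 0}` of a discretely valued field. -/
def InIntegers {L : Type*} [Field L] (v : L → ℤ) (x : L) : Prop :=
  x = 0 ∨ 0 ≤ v x

/-- `v` is a normalized discrete valuation on the field `L` : it is surjective onto `ℤ`,
multiplicative and satisfies the ultrametric inequality (on nonzero elements). -/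
def IsDiscreteValuationOn (L : Type*) [Field L] (v : L → ℤ) : Prop :=
  (∀ n : ℤ, ∃ x : L, x ≠ 0 ∧ v x = n) ∧
  (∀ x y : L, x ≠ 0 → y ≠ 0 → v (x * y) = v x + v y) ∧
  (∀ x y : L, x ≠ 0 → y ≠ 0 → x + y ≠ 0 → min (v x) (v y) ≤ v (x + y))

/-- The residue field extension of `L/K` is separable: the residue class of each
integral element of `L` is a simple root of (the reduction of) a polynomial with
integral coefficients in `K`. -/
def ResidueSeparable (K L : Type*) [Field K] [Field L] [Algebra K L] (v : L → ℤ) : Prop :=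
  ∀ x : L, InIntegers v x →
    ∃ g : Polynomial K,
      (∀ n : ℕ, InIntegers v (algebraMap K L (g.coeff n))) ∧
      (aeval x g = 0 ∨ 0 < v (aeval x g)) ∧
      aeval x (derivative g) ≠ 0 ∧ v (aeval x (derivative g)) = 0

/-- The residue characteristic of `(L, v)` is `p` : either `p` is a prime belonging to
the maximal ideal of the valuation ring, or `p = 0` and every prime is a unit of the
valuation ring. -/
def ResidueCharIs {L : Type*} [Field L] (v : L → ℤ) (p : ℕ) : Prop :=
  (p.Prime ∧ ((p : L) = 0 ∨ 0 < v ((p : L)))) ∨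
  (p = 0 ∧ ∀ q : ℕ, q.Prime → ((q : L) ≠ 0 ∧ v ((q : L)) = 0))

/-- `σ ∈ G_i`, the `i`-th ramification group of `L/K` in the lower numbering:
`v (σ x - x) ≥ i + 1` for every `x` in the valuation ring of `L`. -/
def InRamificationGroup (K : Type*) {L : Type*} [Field K] [Field L] [Algebra K L]
    (v : L → ℤ) (i : ℤ) (σ : L ≃ₐ[K] L) : Prop :=
  ∀ x : L, InIntegers v x → (σ x = x ∨ i + 1 ≤ v (σ x - x))

/-- Congruence of two elements of `L^×` modulo the higher unit group `U_L^i`: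
`c ≡ d mod U_L^i` iff `v (c/d - 1) ≥ i`. -/
def CongUnits {L : Type*} [Field L] (v : L → ℤ) (i : ℤ) (c d : L) : Prop :=
  c = d ∨ i ≤ v (c / d - 1)


namespace RamAux

noncomputable def eV {L : Type*} [Field L] (v : L → ℤ) (x : L) : WithTop ℤ :=
  if x = 0 then ⊤ else (v x : WithTop ℤ)

variable {L : Type*} [Field L] {v : L → ℤ}

lemma eV_zero : eV v 0 = ⊤ := if_pos rfl

lemma eV_of_ne {x : L} (h : x ≠ 0) : eV v x = (v x : WithTop ℤ) := if_neg h

lemma le_eV_iff {c : ℤ} {x : L} : (c : WithTop ℤ) ≤ eV v x ↔ (x = 0 ∨ c ≤ v x) := by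
  rcases eq_or_ne x 0 with h | h
  · simp [h, eV_zero, le_top]
  · simp [eV_of_ne h, h, WithTop.coe_le_coe]

lemma inIntegers_iff {x : L} : InIntegers v x ↔ (0 : WithTop ℤ) ≤ eV v x := by
  rw [show ((0 : WithTop ℤ) = ((0:ℤ) : WithTop ℤ)) from rfl, le_eV_iff]; rfl

section
variable (hv : IsDiscreteValuationOn L v)
include hv

lemma v_one : v 1 = 0 := by
  have := hv.2.1 1 1 one_ne_zero one_ne_zero
  rw [mul_one] at this; omega

lemma eV_one : eV v (1 : L) = 0 := by
  rw [eV_of_ne one_ne_zero, v_one hv]; rfl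

lemma eV_mul (x y : L) : eV v (x * y) = eV v x + eV v y := by
  rcases eq_or_ne x 0 with hx | hx
  · simp [hx, eV_zero]
  rcases eq_or_ne y 0 with hy | hy
  · simp [hy, eV_zero]
  rw [eV_of_ne hx, eV_of_ne hy, eV_of_ne (mul_ne_zero hx hy), hv.2.1 x y hx hy]
  exact_mod_cast rfl

lemma v_neg {x : L} (hx : x ≠ 0) : v (-x) = v x := by
  have h1 : v ((-1 : L) * (-1)) = v (-1) + v (-1) :=
    hv.2.1 _ _ (by norm_num) (by norm_num)
  rw [show ((-1 : L) * (-1)) = 1 by ring, v_one hv] at h1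
  have h2 : v ((-1 : L) * x) = v (-1) + v x := hv.2.1 _ _ (by norm_num) hx
  rw [show ((-1 : L) * x) = -x by ring] at h2
  omega

lemma eV_neg (x : L) : eV v (-x) = eV v x := by
  rcases eq_or_ne x 0 with hx | hx
  · simp [hx]
  · rw [eV_of_ne (neg_ne_zero.mpr hx), eV_of_ne hx, v_neg hv hx]

lemma min_le_eV_add (x y : L) : min (eV v x) (eV v y) ≤ eV v (x + y) := by
  rcases eq_or_ne x 0 with hx | hx
  · simp [hx]
  rcases eq_or_ne y 0 with hy | hy
  · simp [hy]
  rcases eq_or_ne (x + y) 0 with hxy | hxy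
  · simp [hxy, eV_zero]
  rw [eV_of_ne hx, eV_of_ne hy, eV_of_ne hxy]
  have := hv.2.2 x y hx hy hxy
  rw [← WithTop.coe_min]
  exact_mod_cast this

lemma min_le_eV_sub (x y : L) : min (eV v x) (eV v y) ≤ eV v (x - y) := by
  rw [sub_eq_add_neg]
  calc min (eV v x) (eV v y) = min (eV v x) (eV v (-y)) := by rw [eV_neg hv]
  _ ≤ _ := min_le_eV_add hv x (-y)

lemma eV_add_eq_left {x y : L} (h : eV v x < eV v y) : eV v (x + y) = eV v x := by
  have hx : x ≠ 0 := by rintro rfl; rw [eV_zero] at h; exact not_top_lt h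
  rcases eq_or_ne y 0 with hy | hy
  · simp [hy]
  have hxy : x + y ≠ 0 := by
    rintro hxy
    have : y = -x := by linear_combination hxy
    rw [this, eV_neg hv] at h; exact lt_irrefl _ h
  refine le_antisymm ?_ ?_
  · have h2 := min_le_eV_sub hv (x + y) y
    rw [add_sub_cancel_right] at h2
    by_contra hlt
    push_neg at hlt
    have : min (eV v (x+y)) (eV v y) > eV v x := lt_min hlt h
    exact absurd h2 (not_le.mpr this)
  · calc eV v x = min (eV v x) (eV v y) := (min_eq_left h.le).symm
    _ ≤ _ := min_le_eV_add hv x y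

lemma le_eV_sum {α : Type*} {s : Finset α} {f : α → L} {c : WithTop ℤ}
    (h : ∀ a ∈ s, c ≤ eV v (f a)) : c ≤ eV v (∑ a ∈ s, f a) := by
  classical
  induction s using Finset.induction_on with
  | empty => simp [eV_zero]
  | insert _ _ hni ih =>
    rename_i a s
    rw [Finset.sum_insert hni]
    refine le_trans ?_ (min_le_eV_add hv _ _)
    exact le_min (h a (Finset.mem_insert_self a s))
      (ih fun b hb => h b (Finset.mem_insert_of_mem hb))

lemma v_inv {x : L} (hx : x ≠ 0) : v x⁻¹ = - v x := by
  have := hv.2.1 x x⁻¹ hx (inv_ne_zero hx)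
  rw [mul_inv_cancel₀ hx, v_one hv] at this; omega

lemma v_pow {x : L} (hx : x ≠ 0) (n : ℕ) : v (x ^ n) = n * v x := by
  induction n with
  | zero => simpa using v_one hv
  | succ n ih =>
    rw [pow_succ, hv.2.1 _ _ (pow_ne_zero n hx) hx, ih]; push_cast; ring

lemma v_zpow {x : L} (hx : x ≠ 0) (n : ℤ) : v (x ^ n) = n * v x := by
  rcases n with n | n
  · rw [Int.ofNat_eq_natCast, zpow_natCast]; exact_mod_cast v_pow hv hx n
  · rw [zpow_negSucc, v_inv hv (pow_ne_zero _ hx), v_pow hv hx]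
    rw [Int.negSucc_eq]; push_cast; ring

lemma eV_pow (x : L) (hx : x ≠ 0) (n : ℕ) : eV v (x ^ n) = ((n * v x : ℤ) : WithTop ℤ) := by
  rw [eV_of_ne (pow_ne_zero n hx), v_pow hv hx n]

end

section Ram
variable {K : Type*} [Field K] [Algebra K L]

lemma ram_iff {i : ℤ} {σ : L ≃ₐ[K] L} :
    InRamificationGroup K v i σ ↔
      ∀ x : L, (0 : WithTop ℤ) ≤ eV v x → ((i + 1 : ℤ) : WithTop ℤ) ≤ eV v (σ x - x) := by
  unfold InRamificationGroup
  refine forall_congr' fun x => ?_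
  rw [inIntegers_iff]
  refine imp_congr Iff.rfl ?_
  rw [le_eV_iff, sub_eq_zero]

lemma ram_mono {i i' : ℤ} (h : i' ≤ i) {σ : L ≃ₐ[K] L}
    (hσ : InRamificationGroup K v i σ) : InRamificationGroup K v i' σ := by
  intro x hx
  rcases hσ x hx with h1 | h1
  · exact Or.inl h1
  · exact Or.inr (by omega)

lemma ram_one (i : ℤ) : InRamificationGroup K v i (1 : L ≃ₐ[K] L) :=
  fun x _ => Or.inl rfl

lemma aut_apply_inv_apply (σ : L ≃ₐ[K] L) (x : L) : σ (σ⁻¹ x) = x := by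
  rw [← AlgEquiv.mul_apply, mul_inv_cancel]; rfl

lemma aut_inv_apply_apply (σ : L ≃ₐ[K] L) (x : L) : σ⁻¹ (σ x) = x := by
  rw [← AlgEquiv.mul_apply, inv_mul_cancel]; rfl

section
variable (hv : IsDiscreteValuationOn L v)
include hv

lemma ram_int {i : ℤ} (hi : 0 ≤ i) {σ : L ≃ₐ[K] L} (hσ : InRamificationGroup K v i σ)
    {x : L} (hx : (0 : WithTop ℤ) ≤ eV v x) : (0 : WithTop ℤ) ≤ eV v (σ x) := by
  have h1 := (ram_iff.mp hσ) x hx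
  have h2 : σ x = x + (σ x - x) := by ring
  rw [h2]
  refine le_trans ?_ (min_le_eV_add hv x _)
  refine le_min hx (le_trans ?_ h1)
  have : (0:ℤ) ≤ i + 1 := by omega
  exact_mod_cast this

lemma ram_mul {i : ℤ} (hi : 0 ≤ i) {σ τ : L ≃ₐ[K] L}
    (hσ : InRamificationGroup K v i σ) (hτ : InRamificationGroup K v i τ) :
    InRamificationGroup K v i (σ * τ) := by
  rw [ram_iff]
  intro x hx
  have h1 : (σ * τ) x - x = (σ (τ x) - τ x) + (τ x - x) := by
    rw [AlgEquiv.mul_apply]; ring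
  rw [h1]
  refine le_trans (le_min ((ram_iff.mp hσ) _ (ram_int hv hi hτ hx)) ((ram_iff.mp hτ) _ hx))
    (min_le_eV_add hv _ _)


lemma ram_inv_int {i : ℤ} (hi : 0 ≤ i) {σ : L ≃ₐ[K] L} (hσ : InRamificationGroup K v i σ)
    {x : L} (hx : (0 : WithTop ℤ) ≤ eV v x) : (0 : WithTop ℤ) ≤ eV v (σ⁻¹ x) := by
  by_contra hneg
  push_neg at hneg
  set z := σ⁻¹ x with hz
  have hz0 : z ≠ 0 := by
    rintro h0; rw [h0, eV_zero] at hneg; exact not_top_lt hneg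
  have hx0 : x ≠ 0 := by
    rintro rfl
    rw [hz, show σ⁻¹ (0:L) = 0 from map_zero σ⁻¹] at hz0; exact hz0 rfl
  have hvz : v z < 0 := by
    rw [eV_of_ne hz0] at hneg; exact_mod_cast hneg
  have hzi : ((1:ℤ) : WithTop ℤ) ≤ eV v z⁻¹ := by
    rw [eV_of_ne (inv_ne_zero hz0), v_inv hv hz0]
    exact_mod_cast (by omega : (1:ℤ) ≤ -v z)
  have hzi0 : (0 : WithTop ℤ) ≤ eV v z⁻¹ :=
    le_trans (by exact_mod_cast (by norm_num : ((0:ℤ):WithTop ℤ) ≤ 1)) hzi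
  have hstep := (ram_iff.mp hσ) z⁻¹ hzi0
  have h1 : ((1:ℤ) : WithTop ℤ) ≤ eV v (σ z⁻¹) := by
    have hdec : σ z⁻¹ = z⁻¹ + (σ z⁻¹ - z⁻¹) := by ring
    rw [hdec]
    refine le_trans (le_min hzi (le_trans ?_ hstep)) (min_le_eV_add hv _ _)
    exact_mod_cast (by omega : (1:ℤ) ≤ i + 1)
  have h2 : σ z⁻¹ = x⁻¹ := by rw [map_inv₀, hz, aut_apply_inv_apply σ x]
  rw [h2, eV_of_ne (inv_ne_zero hx0), v_inv hv hx0] at h1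
  have h3 : (1:ℤ) ≤ -v x := by exact_mod_cast h1
  have h4 : (0:ℤ) ≤ v x := by
    rw [eV_of_ne hx0] at hx; exact_mod_cast hx
  omega

lemma ram_inv {i : ℤ} (hi : 0 ≤ i) {σ : L ≃ₐ[K] L} (hσ : InRamificationGroup K v i σ) :
    InRamificationGroup K v i σ⁻¹ := by
  rw [ram_iff]
  intro x hx
  have hz : (0 : WithTop ℤ) ≤ eV v (σ⁻¹ x) := ram_inv_int hv hi hσ hx
  have h1 := (ram_iff.mp hσ) (σ⁻¹ x) hz
  rw [aut_apply_inv_apply σ x] at h1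
  have h2 : σ⁻¹ x - x = -(x - σ⁻¹ x) := by ring
  rw [h2, eV_neg hv]
  exact h1

lemma ram_pow {i : ℤ} (hi : 0 ≤ i) {σ : L ≃ₐ[K] L} (hσ : InRamificationGroup K v i σ)
    (n : ℕ) : InRamificationGroup K v i (σ ^ n) := by
  induction n with
  | zero => exact ram_one i
  | succ n ih => rw [pow_succ]; exact ram_mul hv hi ih hσ

lemma v_apply_unit {σ : L ≃ₐ[K] L} (hσ : InRamificationGroup K v 0 σ)
    {x : L} (hx0 : x ≠ 0) (hx : v x = 0) : v (σ x) = 0 := by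
  have hσx0 : σ x ≠ 0 := fun h => hx0 (by simpa using σ.injective (h.trans (map_zero σ).symm))
  have hσxi0 : σ x⁻¹ ≠ 0 :=
    fun h => (inv_ne_zero hx0) (by simpa using σ.injective (h.trans (map_zero σ).symm))
  have hxm : (0 : WithTop ℤ) ≤ eV v x := by
    rw [eV_of_ne hx0, hx]; exact le_refl _
  have hxim : (0 : WithTop ℤ) ≤ eV v x⁻¹ := by
    rw [eV_of_ne (inv_ne_zero hx0), v_inv hv hx0, hx]; exact le_refl _
  have h1 : (0 : WithTop ℤ) ≤ eV v (σ x) := ram_int hv (le_refl 0) hσ hxm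
  have h2 : (0 : WithTop ℤ) ≤ eV v (σ x⁻¹) := ram_int hv (le_refl 0) hσ hxim
  rw [eV_of_ne hσx0] at h1
  rw [eV_of_ne hσxi0] at h2
  have h1' : (0:ℤ) ≤ v (σ x) := by exact_mod_cast h1
  have h2' : (0:ℤ) ≤ v (σ x⁻¹) := by exact_mod_cast h2
  have h3 : v (σ x * σ x⁻¹) = v (σ x) + v (σ x⁻¹) := hv.2.1 _ _ hσx0 hσxi0
  rw [← map_mul, mul_inv_cancel₀ hx0, map_one, v_one hv] at h3
  omega

lemma v_apply {π : L} (hπ0 : π ≠ 0) (hπ1 : v π = 1) {σ : L ≃ₐ[K] L}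
    (hσ : InRamificationGroup K v 0 σ) {x : L} (hx0 : x ≠ 0) : v (σ x) = v x := by
  have hπm : (0 : WithTop ℤ) ≤ eV v π := by rw [eV_of_ne hπ0, hπ1]; exact_mod_cast zero_le_one
  have key : ∀ (τ : L ≃ₐ[K] L), InRamificationGroup K v 0 τ → ∀ y : L, y ≠ 0 →
      v (τ y) = v y * v (τ π) := by
    intro τ hτ y hy0
    have hτπ0 : τ π ≠ 0 := fun h => hπ0 (by simpa using τ.injective (h.trans (map_zero τ).symm))
    set n : ℤ := v y with hn
    set u : L := y * π ^ (-n) with hu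
    have hu0 : u ≠ 0 := mul_ne_zero hy0 (zpow_ne_zero _ hπ0)
    have hvu : v u = 0 := by
      rw [hu, hv.2.1 y _ hy0 (zpow_ne_zero _ hπ0), v_zpow hv hπ0, hπ1]; omega
    have hyu : y = u * π ^ n := by
      rw [hu, mul_assoc, ← zpow_add₀ hπ0]
      simp
    have : τ y = τ u * (τ π) ^ n := by rw [hyu, map_mul, map_zpow₀]
    rw [this, hv.2.1 _ _ (fun h => hu0 (by simpa using τ.injective (h.trans (map_zero τ).symm)))
      (zpow_ne_zero _ hτπ0), v_apply_unit hv hτ hu0 hvu, v_zpow hv hτπ0]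
    omega
  have hσπ0 : σ π ≠ 0 := fun h => hπ0 (by simpa using σ.injective (h.trans (map_zero σ).symm))
  have hσiπ0 : σ⁻¹ π ≠ 0 :=
    fun h => hπ0 (by simpa using σ⁻¹.injective (h.trans (map_zero σ⁻¹).symm))
  have he1 : 1 ≤ v (σ π) := by
    have hstep := (ram_iff.mp hσ) π hπm
    have hdec : σ π = π + (σ π - π) := by ring
    have : ((1:ℤ) : WithTop ℤ) ≤ eV v (σ π) := by
      rw [hdec]
      refine le_trans (le_min ?_ (le_trans ?_ hstep)) (min_le_eV_add hv _ _)
      · rw [eV_of_ne hπ0, hπ1]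
      · norm_num
    rw [eV_of_ne hσπ0] at this; exact_mod_cast this
  have he1' : 1 ≤ v (σ⁻¹ π) := by
    have hstep := (ram_iff.mp (ram_inv hv (le_refl 0) hσ)) π hπm
    have hdec : σ⁻¹ π = π + (σ⁻¹ π - π) := by ring
    have : ((1:ℤ) : WithTop ℤ) ≤ eV v (σ⁻¹ π) := by
      rw [hdec]
      refine le_trans (le_min ?_ (le_trans ?_ hstep)) (min_le_eV_add hv _ _)
      · rw [eV_of_ne hπ0, hπ1]
      · norm_num
    rw [eV_of_ne hσiπ0] at this; exact_mod_cast this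
  have hcomp : v π = v (σ⁻¹ π) * v (σ π) := by
    have h1 : v (σ (σ⁻¹ π)) = v (σ⁻¹ π) * v (σ π) := key σ hσ _ hσiπ0
    rw [aut_apply_inv_apply σ π] at h1
    exact h1
  rw [hπ1] at hcomp
  have he : v (σ π) = 1 := by nlinarith
  rw [key σ hσ x hx0, he, mul_one]

lemma eV_apply {π : L} (hπ0 : π ≠ 0) (hπ1 : v π = 1) {σ : L ≃ₐ[K] L}
    (hσ : InRamificationGroup K v 0 σ) (x : L) : eV v (σ x) = eV v x := by
  rcases eq_or_ne x 0 with rfl | hx0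
  · rw [map_zero]
  · have hσx0 : σ x ≠ 0 := fun h => hx0 (by simpa using σ.injective (h.trans (map_zero σ).symm))
    rw [eV_of_ne hσx0, eV_of_ne hx0, v_apply hv hπ0 hπ1 hσ hx0]

end
end Ram

section ValRing
variable (hv : IsDiscreteValuationOn L v)

def O : Subring L where
  carrier := {x | (0 : WithTop ℤ) ≤ eV v x}
  mul_mem' := by
    intro a b ha hb
    rw [Set.mem_setOf_eq, eV_mul hv]
    exact add_nonneg ha hb
  one_mem' := by rw [Set.mem_setOf_eq, eV_one hv]
  add_mem' := by
    intro a b ha hb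
    exact le_trans (le_min ha hb) (min_le_eV_add hv a b)
  zero_mem' := by rw [Set.mem_setOf_eq, eV_zero]; exact le_top
  neg_mem' := by
    intro a ha
    rw [Set.mem_setOf_eq, eV_neg hv]
    exact ha

def MI : Ideal (O hv) where
  carrier := {x | ((1:ℤ) : WithTop ℤ) ≤ eV v (x : L)}
  add_mem' := by
    intro a b ha hb
    exact le_trans (le_min ha hb) (by push_cast; exact min_le_eV_add hv (a:L) (b:L))
  zero_mem' := by rw [Set.mem_setOf_eq]; push_cast; rw [eV_zero]; exact le_top
  smul_mem' := by
    intro c a ha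
    rw [Set.mem_setOf_eq, smul_eq_mul]
    push_cast
    rw [eV_mul hv]
    calc ((1:ℤ) : WithTop ℤ) = 0 + ((1:ℤ) : WithTop ℤ) := by rw [zero_add]
    _ ≤ _ := add_le_add c.2 ha

lemma MI_isMaximal : (MI hv).IsMaximal := by
  rw [Ideal.isMaximal_iff]
  constructor
  · intro h1
    have : ((1:ℤ) : WithTop ℤ) ≤ eV v ((1 : O hv) : L) := h1
    rw [OneMemClass.coe_one, eV_one hv] at this
    exact absurd this (by exact_mod_cast (by norm_num : ¬ ((1:ℤ) ≤ (0:ℤ))))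
  · intro J x _ hx hxJ
    have hxnm : ¬ (((1:ℤ) : WithTop ℤ) ≤ eV v (x : L)) := hx
    have hx0 : (x : L) ≠ 0 := by
      rintro h0
      rw [h0, eV_zero] at hxnm
      exact hxnm le_top
    have hxO : (0 : WithTop ℤ) ≤ eV v (x : L) := x.2
    have hvx : v (x : L) = 0 := by
      rw [eV_of_ne hx0] at hxnm hxO
      have h1 : ¬ ((1:ℤ) ≤ v (x:L)) := fun h => hxnm (by exact_mod_cast h)
      have h2 : (0:ℤ) ≤ v (x:L) := by exact_mod_cast hxO
      omega
    have hinv : ((x : L)⁻¹) ∈ O hv := by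
      show (0 : WithTop ℤ) ≤ eV v (x:L)⁻¹
      rw [eV_of_ne (inv_ne_zero hx0), v_inv hv hx0, hvx]
      exact le_refl _
    have hmul : ((⟨(x : L)⁻¹, hinv⟩ : O hv) * x) = 1 := by
      apply Subtype.ext
      push_cast
      exact inv_mul_cancel₀ hx0
    rw [← hmul]
    exact J.mul_mem_left _ hxJ

end ValRing

section Hard
variable {K : Type*} [Field K] [Algebra K L] (hv : IsDiscreteValuationOn L v)
include hv

omit hv in
lemma ne_zero_of_apply {σ : L ≃ₐ[K] L} {x : L} (hx0 : x ≠ 0) : σ x ≠ 0 :=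
  fun h => hx0 (by simpa using σ.injective (h.trans (map_zero σ).symm))

lemma ram_one_of_pi (hsep : ResidueSeparable K L v)
    {π : L} (hπ0 : π ≠ 0) (hπ1 : v π = 1) {σ : L ≃ₐ[K] L}
    (hσ : InRamificationGroup K v 0 σ)
    (h2 : ((2:ℤ) : WithTop ℤ) ≤ eV v (σ π - π)) :
    InRamificationGroup K v 1 σ := by
  rw [ram_iff]
  intro x hx
  by_contra hcon
  push_neg at hcon
  have h1 : ((1:ℤ) : WithTop ℤ) ≤ eV v (σ x - x) := by
    have := (ram_iff.mp hσ) x hx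
    simpa using this
  set y := σ x - x with hy
  have hy0 : y ≠ 0 := by
    rintro h0
    rw [h0, eV_zero] at hcon
    exact not_top_lt hcon
  have hvy : v y = 1 := by
    rw [eV_of_ne hy0] at hcon h1
    have hc : v y < 1 + 1 := by exact_mod_cast hcon
    have hc' : 1 ≤ v y := by exact_mod_cast h1
    omega
  have hyO : (0 : WithTop ℤ) ≤ eV v y := by
    rw [eV_of_ne hy0, hvy]; exact_mod_cast zero_le_one
  obtain ⟨g, hgint, hgval, hgd0, hgdval⟩ := hsep x (inIntegers_iff.mpr hx)
  set G' := g.map (algebraMap K L) with hG'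
  have hsub : (↑G'.coeffs : Set L) ⊆ (O hv : Set L) := by
    intro cc hcc
    rw [Finset.mem_coe] at hcc
    obtain ⟨n, _, hcn⟩ := Polynomial.mem_coeffs_iff.mp hcc
    rw [SetLike.mem_coe, hcn, hG', Polynomial.coeff_map]
    exact inIntegers_iff.mp (hgint n)
  set gh := G'.toSubring (O hv) hsub with hgh
  obtain ⟨E, hE⟩ := Polynomial.binomExpansion gh ⟨x, hx⟩ ⟨y, hyO⟩
  have hGmap : G' = gh.map ((O hv).subtype) := (Polynomial.map_toSubring _ _ _).symm
  have heval : ∀ a : O hv, ((gh.eval a : O hv) : L) = G'.eval (a : L) := by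
    intro a
    rw [hGmap, Polynomial.eval_map]
    exact (Polynomial.eval₂_hom ((O hv).subtype) a).symm
  have hdeval : ∀ a : O hv, ((gh.derivative.eval a : O hv) : L) = G'.derivative.eval (a : L) := by
    intro a
    rw [hGmap, Polynomial.derivative_map, Polynomial.eval_map]
    exact (Polynomial.eval₂_hom ((O hv).subtype) a).symm
  have hEL : G'.eval (x + y) =
      G'.eval x + G'.derivative.eval x * y + (E : L) * y ^ 2 := by
    have := congrArg (Subtype.val : O hv → L) hE
    push_cast at this
    rw [heval, heval, hdeval] at this
    push_cast at this
    exact this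
  have hxy : x + y = σ x := by rw [hy]; ring
  have haev : G'.eval x = aeval x g := by
    rw [hG', Polynomial.eval_map, Polynomial.aeval_def]
  have haevσ : G'.eval (σ x) = σ (G'.eval x) := by
    rw [haev, hG', Polynomial.eval_map, ← Polynomial.aeval_def]
    exact (Polynomial.aeval_algHom_apply σ.toAlgHom x g)
  set c := G'.eval x with hc
  have hc1 : ((1:ℤ) : WithTop ℤ) ≤ eV v c := by
    rw [haev]
    rcases hgval with h | h
    · rw [h, eV_zero]; exact le_top
    · rcases eq_or_ne (aeval x g) 0 with h0 | h0
      · rw [h0, eV_zero]; exact le_top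
      · rw [eV_of_ne h0]; exact_mod_cast h
  have hπm : (0 : WithTop ℤ) ≤ eV v π := by
    rw [eV_of_ne hπ0, hπ1]; exact_mod_cast zero_le_one
  have hσπ : eV v (σ π) = ((1:ℤ) : WithTop ℤ) := by
    rw [eV_apply hv hπ0 hπ1 hσ π, eV_of_ne hπ0, hπ1]
  have hA : ((2:ℤ) : WithTop ℤ) ≤ eV v (σ c - c) := by
    rcases eq_or_ne c 0 with h0 | hc0
    · rw [h0, map_zero, sub_zero, eV_zero]; exact le_top
    · set w := c * π⁻¹ with hw
      have hw0 : w ≠ 0 := mul_ne_zero hc0 (inv_ne_zero hπ0)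
      have hwO : (0 : WithTop ℤ) ≤ eV v w := by
        rw [eV_of_ne hw0, hw, hv.2.1 _ _ hc0 (inv_ne_zero hπ0), v_inv hv hπ0, hπ1]
        rw [eV_of_ne hc0] at hc1
        have : (1:ℤ) ≤ v c := by exact_mod_cast hc1
        exact_mod_cast (by omega : (0:ℤ) ≤ v c + -1)
      have hcwπ : c = w * π := by
        rw [hw, mul_assoc, inv_mul_cancel₀ hπ0, mul_one]
      have hdec : σ c - c = σ π * (σ w - w) + w * (σ π - π) := by
        rw [hcwπ, map_mul]
        ring
      rw [hdec]
      refine le_trans (le_min ?_ ?_) (min_le_eV_add hv _ _)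
      · rw [eV_mul hv, hσπ]
        have hsw : ((1:ℤ) : WithTop ℤ) ≤ eV v (σ w - w) := by
          have := (ram_iff.mp hσ) w hwO
          simpa using this
        calc ((2:ℤ) : WithTop ℤ) = ((1:ℤ) : WithTop ℤ) + ((1:ℤ) : WithTop ℤ) := by
              rw [← WithTop.coe_add]; norm_num
        _ ≤ _ := add_le_add (le_refl _) hsw
      · rw [eV_mul hv]
        calc ((2:ℤ) : WithTop ℤ) = 0 + ((2:ℤ) : WithTop ℤ) := by rw [zero_add]
        _ ≤ _ := add_le_add hwO h2
  have hEq : G'.derivative.eval x * y = (σ c - c) - (E : L) * y ^ 2 := by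
    have h3 : σ c = c + G'.derivative.eval x * y + (E : L) * y ^ 2 := by
      rw [hc, ← haevσ, ← hxy, hEL]
    rw [h3]; ring
  have hD : eV v (G'.derivative.eval x) = ((0:ℤ) : WithTop ℤ) := by
    have hDaev : G'.derivative.eval x = aeval x (derivative g) := by
      rw [hG', Polynomial.derivative_map, Polynomial.eval_map, Polynomial.aeval_def]
    rw [hDaev, eV_of_ne hgd0, hgdval]
  have hDy : eV v (G'.derivative.eval x * y) = ((1:ℤ) : WithTop ℤ) := by
    rw [eV_mul hv, hD, eV_of_ne hy0, hvy, ← WithTop.coe_add]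
    norm_num
  have hEy : ((2:ℤ) : WithTop ℤ) ≤ eV v ((E : L) * y ^ 2) := by
    rw [eV_mul hv, eV_pow hv y hy0 2, hvy]
    calc ((2:ℤ) : WithTop ℤ) = 0 + ((2 * 1 : ℤ) : WithTop ℤ) := by norm_num
    _ ≤ _ := add_le_add E.2 (le_refl _)
  have hfin : ((2:ℤ) : WithTop ℤ) ≤ eV v (G'.derivative.eval x * y) := by
    rw [hEq]
    refine le_trans (le_min hA ?_) (min_le_eV_sub hv _ _)
    exact hEy
  rw [hDy] at hfin
  exact absurd hfin (by exact_mod_cast (by norm_num : ¬ ((2:ℤ) ≤ 1)))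

end Hard

section Shift
variable {K : Type*} [Field K] [Algebra K L] (hv : IsDiscreteValuationOn L v)
include hv

lemma ram_shift {π : L} (hπ0 : π ≠ 0) (hπ1 : v π = 1) {σ : L ≃ₐ[K] L} {i : ℤ} (hi : 1 ≤ i)
    (hσ : InRamificationGroup K v i σ) {z : L} (hz0 : z ≠ 0)
    (hz : ((1:ℤ) : WithTop ℤ) ≤ eV v z) :
    ((v z + i : ℤ) : WithTop ℤ) ≤ eV v (σ z - z) := by
  have hσ0 : InRamificationGroup K v 0 σ := ram_mono (by omega) hσ
  have hvz1 : 1 ≤ v z := by rw [eV_of_ne hz0] at hz; exact_mod_cast hz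
  set n : ℕ := (v z).toNat with hn
  have hnz : (n : ℤ) = v z := Int.toNat_of_nonneg (by omega)
  have hπn0 : π ^ n ≠ 0 := pow_ne_zero _ hπ0
  set u := z * (π ^ n)⁻¹ with hu
  have hu0 : u ≠ 0 := mul_ne_zero hz0 (inv_ne_zero hπn0)
  have hvu : v u = 0 := by
    rw [hu, hv.2.1 _ _ hz0 (inv_ne_zero hπn0), v_inv hv hπn0, v_pow hv hπ0, hπ1]
    omega
  have huO : (0 : WithTop ℤ) ≤ eV v u := by
    rw [eV_of_ne hu0, hvu]; exact le_refl _
  have hπm : (0 : WithTop ℤ) ≤ eV v π := by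
    rw [eV_of_ne hπ0, hπ1]; exact_mod_cast zero_le_one
  have hzu : z = u * π ^ n := by rw [hu, mul_assoc, inv_mul_cancel₀ hπn0, mul_one]
  have hdec : σ z - z = σ (π ^ n) * (σ u - u) + u * (σ (π ^ n) - π ^ n) := by
    rw [hzu, map_mul]; ring
  have hvσπ : v (σ π) = 1 := by rw [v_apply hv hπ0 hπ1 hσ0 hπ0, hπ1]
  have hσπ0 : σ π ≠ 0 := ne_zero_of_apply hπ0
  have hσπn : eV v (σ (π ^ n)) = ((n : ℤ) : WithTop ℤ) := by
    rw [map_pow, eV_pow hv _ hσπ0 n, hvσπ, mul_one]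
  have hπdiff : ((i + 1 : ℤ) : WithTop ℤ) ≤ eV v (σ π - π) := (ram_iff.mp hσ) π hπm
  have hudiff : ((i + 1 : ℤ) : WithTop ℤ) ≤ eV v (σ u - u) := (ram_iff.mp hσ) u huO
  rw [hdec]
  refine le_trans (le_min ?_ ?_) (min_le_eV_add hv _ _)
  · rw [eV_mul hv, hσπn]
    calc ((v z + i : ℤ) : WithTop ℤ) ≤ ((n + (i + 1) : ℤ) : WithTop ℤ) := by
          exact_mod_cast (by omega : (v z + i : ℤ) ≤ (n : ℤ) + (i + 1))
    _ = ((n:ℤ) : WithTop ℤ) + ((i + 1 : ℤ) : WithTop ℤ) := by push_cast; ring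
    _ ≤ _ := add_le_add (le_refl _) hudiff
  · have hgeo : σ (π ^ n) - π ^ n =
        (∑ j ∈ Finset.range n, σ π ^ j * π ^ (n - 1 - j)) * (σ π - π) := by
      rw [map_pow, ← geom_sum₂_mul]
    have hsum : ((n - 1 : ℤ) : WithTop ℤ) ≤
        eV v (∑ j ∈ Finset.range n, σ π ^ j * π ^ (n - 1 - j)) := by
      apply le_eV_sum hv
      intro j hj
      have hj' : j < n := Finset.mem_range.mp hj
      rw [eV_mul hv, eV_pow hv _ hσπ0 j, eV_pow hv π hπ0 _, hvσπ, hπ1, ← WithTop.coe_add]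
      refine WithTop.coe_le_coe.mpr ?_
      have : ((n - 1 - j : ℕ) : ℤ) = (n : ℤ) - 1 - j := by omega
      omega
    rw [eV_mul hv u (σ (π ^ n) - π ^ n), hgeo, eV_mul hv _ (σ π - π)]
    calc ((v z + i : ℤ) : WithTop ℤ)
        = ((0 : ℤ) : WithTop ℤ) + (((n - 1 : ℤ) : WithTop ℤ) + ((i + 1 : ℤ) : WithTop ℤ)) := by
          rw [← WithTop.coe_add, ← WithTop.coe_add, WithTop.coe_eq_coe]
          omega
    _ ≤ _ := by
          refine add_le_add ?_ (add_le_add hsum hπdiff)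
          rw [eV_of_ne hu0, hvu]

end Shift

section Telescope
variable {K : Type*} [Field K] [Algebra K L]

lemma telescope (σ : L ≃ₐ[K] L) (x : L) (n : ℕ) :
    (σ ^ n) x - x = ∑ j ∈ Finset.range n, (σ ^ j) (σ x - x) := by
  induction n with
  | zero => simp
  | succ n ih =>
    rw [Finset.sum_range_succ, ← ih]
    have h1 : (σ ^ (n + 1)) x = (σ ^ n) (σ x) := by
      rw [pow_succ, AlgEquiv.mul_apply]
    have h2 : (σ ^ n) (σ x) = (σ ^ n) x + (σ ^ n) (σ x - x) := by
      rw [← map_add]; congr 1; ring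
    rw [h1, h2]; ring

end Telescope

section Wild
variable {K : Type*} [Field K] [Algebra K L] [FiniteDimensional K L]
variable (hv : IsDiscreteValuationOn L v)
include hv

lemma wild_eq_one {π : L} (hπ0 : π ≠ 0) (hπ1 : v π = 1)
    (hq : ∀ q : ℕ, q.Prime → ((q : L) ≠ 0 ∧ v ((q : L)) = 0))
    {τ : L ≃ₐ[K] L} (hτ : InRamificationGroup K v 1 τ) : τ = 1 := by
  by_contra hne
  set n := orderOf τ with hn
  have hn1 : n ≠ 1 := by rwa [hn, Ne, orderOf_eq_one_iff]
  have hn0 : 0 < n := orderOf_pos τ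
  set q := n.minFac with hqdef
  have hqp : q.Prime := Nat.minFac_prime hn1
  set ρ := τ ^ (n / q) with hρ
  have hρq : ρ ^ q = 1 := by
    rw [hρ, ← pow_mul, Nat.div_mul_cancel (Nat.minFac_dvd n), hn, pow_orderOf_eq_one]
  have hρ1 : ρ ≠ 1 := by
    intro h
    have hdvd : n ∣ n / q := orderOf_dvd_of_pow_eq_one h
    have hlt : n / q < n := Nat.div_lt_self hn0 hqp.one_lt
    have hpos : 0 < n / q := Nat.div_pos (Nat.minFac_le hn0) hqp.pos
    exact absurd (Nat.le_of_dvd hpos hdvd) (not_le.mpr hlt)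
  have hρram : InRamificationGroup K v 1 ρ := ram_pow hv zero_le_one hτ _
  obtain ⟨x1, hx1⟩ : ∃ x : L, ρ x ≠ x := by
    by_contra hall
    push_neg at hall
    exact hρ1 (AlgEquiv.ext hall)
  have hex : ∃ x : L, (0 : WithTop ℤ) ≤ eV v x ∧ ρ x ≠ x := by
    rcases le_or_gt (0 : WithTop ℤ) (eV v x1) with h | h
    · exact ⟨x1, h, hx1⟩
    · have hx10 : x1 ≠ 0 := by
        rintro rfl
        rw [eV_zero] at h
        exact absurd h (not_lt.mpr le_top)
      refine ⟨x1⁻¹, ?_, ?_⟩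
      · rw [eV_of_ne (inv_ne_zero hx10), v_inv hv hx10]
        rw [eV_of_ne hx10] at h
        have hvx : v x1 < 0 := by exact_mod_cast h
        exact_mod_cast (by omega : (0:ℤ) ≤ -v x1)
      · rw [map_inv₀]
        intro hcon
        exact hx1 (inv_injective hcon)
  set P : ℤ → Prop := fun d => ∃ x : L, (0 : WithTop ℤ) ≤ eV v x ∧ ρ x ≠ x ∧ v (ρ x - x) = d
    with hP
  have hP2 : ∀ d, P d → 2 ≤ d := by
    rintro d ⟨x, hx, hne', hvd⟩
    have hbig := (ram_iff.mp hρram) x hx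
    have h0 : ρ x - x ≠ 0 := sub_ne_zero.mpr hne'
    rw [eV_of_ne h0] at hbig
    have : (1 + 1 : ℤ) ≤ v (ρ x - x) := by exact_mod_cast hbig
    omega
  have hPex : ∃ d, P d := by
    obtain ⟨x, hx, hne'⟩ := hex
    exact ⟨v (ρ x - x), x, hx, hne', rfl⟩
  obtain ⟨d0, hd0P, hleast⟩ := Int.exists_least_of_bdd ⟨2, hP2⟩ hPex
  obtain ⟨x0, hx0O, hx0ne, hx0v⟩ := hd0P
  have hd02 : 2 ≤ d0 := hP2 d0 ⟨x0, hx0O, hx0ne, hx0v⟩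
  set i : ℤ := d0 - 1 with hi
  have hi1 : 1 ≤ i := by omega
  have hρi : InRamificationGroup K v i ρ := by
    rw [ram_iff]
    intro z hz
    rcases eq_or_ne (ρ z) z with he | hne'
    · rw [he, sub_self, eV_zero]; exact le_top
    · have h0 : ρ z - z ≠ 0 := sub_ne_zero.mpr hne'
      rw [eV_of_ne h0]
      have hl := hleast (v (ρ z - z)) ⟨z, hz, hne', rfl⟩
      exact_mod_cast (by omega : (i + 1 : ℤ) ≤ v (ρ z - z))
  set y := ρ x0 - x0 with hy
  have hy0 : y ≠ 0 := sub_ne_zero.mpr hx0ne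
  have hvy : v y = d0 := hx0v
  have hy1 : ((1:ℤ) : WithTop ℤ) ≤ eV v y := by
    rw [eV_of_ne hy0, hvy]
    exact_mod_cast (by omega : (1:ℤ) ≤ d0)
  have htel : (0 : L) = ∑ j ∈ Finset.range q, (ρ ^ j) y := by
    have h1 := telescope ρ x0 q
    rw [hρq, show ((1 : L ≃ₐ[K] L) x0) = x0 from rfl, sub_self] at h1
    exact h1
  have hsplit : ∑ j ∈ Finset.range q, (ρ ^ j) y
      = (q : L) * y + ∑ j ∈ Finset.range q, ((ρ ^ j) y - y) := by
    have h1 : ∀ j ∈ Finset.range q, (ρ ^ j) y = y + ((ρ ^ j) y - y) := by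
      intro j _; ring
    rw [Finset.sum_congr rfl h1, Finset.sum_add_distrib, Finset.sum_const, Finset.card_range,
      nsmul_eq_mul]
  have hqL := hq q hqp
  have hmain : eV v ((q : L) * y) = ((d0 : ℤ) : WithTop ℤ) := by
    rw [eV_mul hv, eV_of_ne hqL.1, hqL.2, eV_of_ne hy0, hvy, ← WithTop.coe_add, zero_add]
  have hrest : ((d0 + 1 : ℤ) : WithTop ℤ) ≤
      eV v (∑ j ∈ Finset.range q, ((ρ ^ j) y - y)) := by
    apply le_eV_sum hv
    intro j _
    rcases eq_or_ne ((ρ ^ j) y) y with he | hne'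
    · rw [he, sub_self, eV_zero]; exact le_top
    · have hρj : InRamificationGroup K v i (ρ ^ j) := ram_pow hv (by omega) hρi j
      have hs := ram_shift hv hπ0 hπ1 hi1 hρj hy0 hy1
      refine le_trans ?_ hs
      exact_mod_cast (by omega : (d0 + 1 : ℤ) ≤ v y + i)
  have hflip : (q : L) * y = - ∑ j ∈ Finset.range q, ((ρ ^ j) y - y) := by
    have h2 := htel
    rw [hsplit] at h2
    exact eq_neg_of_add_eq_zero_left h2.symm
  rw [hflip, eV_neg hv] at hmain
  rw [hmain] at hrest
  exact absurd hrest (by exact_mod_cast (by omega : ¬ ((d0 + 1 : ℤ) ≤ d0)))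

end Wild
end RamAux

open RamAux

set_option maxHeartbeats 1000000 in
/-- Let `L/K` be a finite Galois extension of complete discretely
valued fields with separable residue extension of characteristic `p`.  Then `G₀/G₁` is
a cyclic group of order prime to `p` (where, if `p = 0`, this means that `G₁` is
trivial and `G₀` is cyclic):  there is `σ ∈ G₀` whose class generates `G₀/G₁`, of exact
order `m` modulo `G₁` with `p ∤ m` when `p` is prime, and `G₁ = 1` when `p = 0`. -/
theorem inertia_mod_wild_is_cyclic_prime_to_p
    (K L : Type*) [Field K] [Field L] [Algebra K L]
    [FiniteDimensional K L] [IsGalois K L]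
    (v : L → ℤ) (hv : IsDiscreteValuationOn L v)
    (hcomplL : VComplete v)
    (hcomplK : VComplete (fun y : K => v (algebraMap K L y)))
    (hsep : ResidueSeparable K L v)
    (p : ℕ) (hp : ResidueCharIs v p) :
    ∃ (σ : L ≃ₐ[K] L) (m : ℕ), 0 < m ∧
      InRamificationGroup K v 0 σ ∧
      InRamificationGroup K v 1 (σ ^ m) ∧
      (∀ j : ℕ, 0 < j → j < m → ¬ InRamificationGroup K v 1 (σ ^ j)) ∧
      (∀ τ : L ≃ₐ[K] L, InRamificationGroup K v 0 τ →
        ∃ j : ℕ, InRamificationGroup K v 1 (τ * (σ ^ j)⁻¹)) ∧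
      (p.Prime → ¬ p ∣ m) ∧
      (p = 0 → ∀ τ : L ≃ₐ[K] L, InRamificationGroup K v 1 τ → τ = 1) := by
  classical
  obtain ⟨π, hπ0, hπ1⟩ := hv.1 1
  haveI : (MI hv).IsMaximal := MI_isMaximal hv
  haveI : IsDomain ((O hv) ⧸ (MI hv)) := Ideal.Quotient.isDomain (MI hv)
  -- basic facts about u σ := σ π / π
  have hπm : (0 : WithTop ℤ) ≤ eV v π := by
    rw [eV_of_ne hπ0, hπ1]; exact_mod_cast zero_le_one
  have hu0 : ∀ σ : L ≃ₐ[K] L, σ π / π ≠ 0 := fun σ =>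
    div_ne_zero (ne_zero_of_apply hπ0) hπ0
  have huval : ∀ σ : L ≃ₐ[K] L, InRamificationGroup K v 0 σ → v (σ π / π) = 0 := by
    intro σ hσ
    rw [div_eq_mul_inv, hv.2.1 _ _ (ne_zero_of_apply hπ0) (inv_ne_zero hπ0),
      v_apply hv hπ0 hπ1 hσ hπ0, v_inv hv hπ0, hπ1]
    omega
  have humem : ∀ σ : L ≃ₐ[K] L, InRamificationGroup K v 0 σ → (σ π / π) ∈ O hv := by
    intro σ hσ
    show (0 : WithTop ℤ) ≤ eV v (σ π / π)
    rw [eV_of_ne (hu0 σ), huval σ hσ]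
    norm_num
  have huimem : ∀ σ : L ≃ₐ[K] L, InRamificationGroup K v 0 σ → ((σ π / π)⁻¹) ∈ O hv := by
    intro σ hσ
    show (0 : WithTop ℤ) ≤ eV v (σ π / π)⁻¹
    rw [eV_of_ne (inv_ne_zero (hu0 σ)), v_inv hv (hu0 σ), huval σ hσ]
    norm_num
  -- the inertia subgroup
  let H : Subgroup (L ≃ₐ[K] L) :=
    { carrier := {σ | InRamificationGroup K v 0 σ}
      mul_mem' := fun ha hb => ram_mul hv le_rfl ha hb
      one_mem' := ram_one 0
      inv_mem' := fun ha => ram_inv hv le_rfl ha }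
  have hHmem : ∀ σ : H, InRamificationGroup K v 0 (σ : L ≃ₐ[K] L) := fun σ => σ.2
  have hcancel : ∀ σ : H,
      (⟨(σ : L ≃ₐ[K] L) π / π, humem _ (hHmem σ)⟩ : O hv) *
        ⟨((σ : L ≃ₐ[K] L) π / π)⁻¹, huimem _ (hHmem σ)⟩ = 1 := by
    intro σ
    apply Subtype.ext
    push_cast
    exact mul_inv_cancel₀ (hu0 _)
  have hcancel' : ∀ σ : H,
      (⟨((σ : L ≃ₐ[K] L) π / π)⁻¹, huimem _ (hHmem σ)⟩ : O hv) *
        ⟨(σ : L ≃ₐ[K] L) π / π, humem _ (hHmem σ)⟩ = 1 := by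
    intro σ
    apply Subtype.ext
    push_cast
    exact inv_mul_cancel₀ (hu0 _)
  -- θ : H →* units of the residue field
  let θfun : H → ((O hv) ⧸ (MI hv))ˣ := fun σ =>
    { val := Ideal.Quotient.mk (MI hv) ⟨(σ : L ≃ₐ[K] L) π / π, humem _ (hHmem σ)⟩
      inv := Ideal.Quotient.mk (MI hv) ⟨((σ : L ≃ₐ[K] L) π / π)⁻¹, huimem _ (hHmem σ)⟩
      val_inv := by rw [← map_mul, hcancel σ, map_one]
      inv_val := by rw [← map_mul, hcancel' σ, map_one] }
  have hcong : ∀ (a b : O hv), ((1:ℤ) : WithTop ℤ) ≤ eV v ((a : L) - (b : L)) →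
      Ideal.Quotient.mk (MI hv) a = Ideal.Quotient.mk (MI hv) b := by
    intro a b h
    rw [Ideal.Quotient.eq]
    show ((1:ℤ) : WithTop ℤ) ≤ eV v _
    push_cast
    exact h
  let θ : H →* ((O hv) ⧸ (MI hv))ˣ :=
    { toFun := θfun
      map_one' := by
        apply Units.ext
        show Ideal.Quotient.mk (MI hv) ⟨(1 : L ≃ₐ[K] L) π / π, _⟩ = 1
        have h2 : (⟨(1 : L ≃ₐ[K] L) π / π, humem _ (hHmem 1)⟩ : O hv) = 1 :=
          Subtype.ext (by show (1 : L ≃ₐ[K] L) π / π = 1; exact div_self hπ0)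
        rw [h2, map_one]
      map_mul' := by
        intro a b
        apply Units.ext
        show Ideal.Quotient.mk (MI hv) ⟨((a*b : H) : L ≃ₐ[K] L) π / π, _⟩ =
          Ideal.Quotient.mk (MI hv) (⟨(a : L ≃ₐ[K] L) π / π, _⟩ * ⟨(b : L ≃ₐ[K] L) π / π, _⟩)
        apply hcong
        push_cast
        set A := (a : L ≃ₐ[K] L)
        set B := (b : L ≃ₐ[K] L)
        have hw : (0 : WithTop ℤ) ≤ eV v (B π / π) := by
          rw [eV_of_ne (hu0 B), huval B (hHmem b)]
          norm_num
        have hid : (A*B) π / π - (A π / π) * (B π / π)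
            = (A π / π) * (A (B π / π) - B π / π) := by
          rw [AlgEquiv.mul_apply, map_div₀]
          have hAπ : A π ≠ 0 := ne_zero_of_apply hπ0
          field_simp
        rw [hid, eV_mul hv]
        have h2 : ((1:ℤ) : WithTop ℤ) ≤ eV v (A (B π / π) - B π / π) := by
          have := (ram_iff.mp (hHmem a)) (B π / π) hw
          simpa using this
        calc ((1:ℤ) : WithTop ℤ) = 0 + ((1:ℤ) : WithTop ℤ) := by rw [zero_add]
        _ ≤ _ := add_le_add (by rw [eV_of_ne (hu0 A), huval A (hHmem a)]; norm_num) h2 }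
  -- kernel characterization
  have hdiff : ∀ σ : H, ((σ : L ≃ₐ[K] L) π / π - 1) = ((σ : L ≃ₐ[K] L) π - π) * π⁻¹ := by
    intro σ
    field_simp
  have hker : ∀ σ : H, (θ σ = 1 ↔ InRamificationGroup K v 1 (σ : L ≃ₐ[K] L)) := by
    intro σ
    have hval : θ σ = 1 ↔ ((1:ℤ) : WithTop ℤ) ≤ eV v ((σ : L ≃ₐ[K] L) π / π - 1) := by
      constructor
      · intro h
        have h1 : Ideal.Quotient.mk (MI hv) ⟨(σ : L ≃ₐ[K] L) π / π, humem _ (hHmem σ)⟩ = 1 :=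
          congrArg Units.val h
        rw [show (1 : (O hv) ⧸ (MI hv)) = Ideal.Quotient.mk (MI hv) 1 from (map_one _).symm,
          Ideal.Quotient.eq] at h1
        have h2 : ((1:ℤ) : WithTop ℤ) ≤
            eV v (((⟨(σ : L ≃ₐ[K] L) π / π, humem _ (hHmem σ)⟩ - 1 : O hv) : L)) := h1
        push_cast at h2
        exact h2
      · intro h
        apply Units.ext
        show Ideal.Quotient.mk (MI hv) ⟨(σ : L ≃ₐ[K] L) π / π, humem _ (hHmem σ)⟩ = 1
        rw [show (1 : (O hv) ⧸ (MI hv)) = Ideal.Quotient.mk (MI hv) 1 from (map_one _).symm]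
        apply hcong
        push_cast
        exact h
    rw [hval]
    rcases eq_or_ne ((σ : L ≃ₐ[K] L) π) π with heq | hne
    · constructor
      · intro _
        apply ram_one_of_pi hv hsep hπ0 hπ1 (hHmem σ)
        rw [heq, sub_self, eV_zero]; exact le_top
      · intro _
        rw [show (σ : L ≃ₐ[K] L) π / π = 1 from by rw [heq, div_self hπ0], sub_self, eV_zero]
        exact le_top
    · have hd0 : (σ : L ≃ₐ[K] L) π - π ≠ 0 := sub_ne_zero.mpr hne
      have hud0 : (σ : L ≃ₐ[K] L) π / π - 1 ≠ 0 := by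
        rw [hdiff σ]
        exact mul_ne_zero hd0 (inv_ne_zero hπ0)
      have hveq : v ((σ : L ≃ₐ[K] L) π / π - 1) = v ((σ : L ≃ₐ[K] L) π - π) - 1 := by
        rw [hdiff σ, hv.2.1 _ _ hd0 (inv_ne_zero hπ0), v_inv hv hπ0, hπ1]
        omega
      constructor
      · intro h
        apply ram_one_of_pi hv hsep hπ0 hπ1 (hHmem σ)
        rw [eV_of_ne hud0, hveq] at h
        have h1 : (1:ℤ) ≤ v ((σ : L ≃ₐ[K] L) π - π) - 1 := by exact_mod_cast h
        rw [eV_of_ne hd0]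
        exact_mod_cast (by omega : (2:ℤ) ≤ v ((σ : L ≃ₐ[K] L) π - π))
      · intro h
        have h2 := (ram_iff.mp h) π hπm
        rw [eV_of_ne hd0] at h2
        have h3 : (1 + 1 : ℤ) ≤ v ((σ : L ≃ₐ[K] L) π - π) := by exact_mod_cast h2
        rw [eV_of_ne hud0, hveq]
        exact_mod_cast (by omega : (1:ℤ) ≤ v ((σ : L ≃ₐ[K] L) π - π) - 1)
  -- cyclic image
  haveI hTfin : Finite θ.range := (Set.finite_range θ).to_subtype
  haveI : IsCyclic θ.range := subgroup_units_cyclic θ.range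
  obtain ⟨gg, hgen⟩ := IsCyclic.exists_generator (α := θ.range)
  obtain ⟨s0, hs0⟩ := gg.2
  have hfin : IsOfFinOrder (θ s0) := by
    refine isOfFinOrder_iff_pow_eq_one.mpr ⟨orderOf s0, orderOf_pos s0, ?_⟩
    rw [← map_pow, pow_orderOf_eq_one, map_one]
  set m := orderOf (θ s0) with hm
  have hmpos : 0 < m := hfin.orderOf_pos
  refine ⟨(s0 : L ≃ₐ[K] L), m, hmpos, hHmem s0, ?_, ?_, ?_, ?_, ?_⟩
  · -- σ ^ m ∈ G₁
    have h1 : θ (s0 ^ m) = 1 := by rw [map_pow, hm, pow_orderOf_eq_one]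
    have h2 := (hker (s0 ^ m)).mp h1
    rwa [show ((s0 ^ m : H) : L ≃ₐ[K] L) = (s0 : L ≃ₐ[K] L) ^ m from rfl] at h2
  · -- minimality
    intro j hj0 hjm hram
    have h1 : θ (s0 ^ j) = 1 := by
      apply (hker (s0 ^ j)).mpr
      rwa [show ((s0 ^ j : H) : L ≃ₐ[K] L) = (s0 : L ≃ₐ[K] L) ^ j from rfl]
    rw [map_pow] at h1
    have h2 : m ∣ j := orderOf_dvd_of_pow_eq_one h1
    exact absurd (Nat.le_of_dvd hj0 h2) (not_le.mpr hjm)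
  · -- generation
    intro τ hτ
    set t : H := ⟨τ, hτ⟩ with ht
    obtain ⟨zn, hzn⟩ := hgen ⟨θ t, ⟨t, rfl⟩⟩
    have hzn' : (θ s0) ^ zn = θ t := by
      have h1 := congrArg (Subtype.val : θ.range → ((O hv) ⧸ (MI hv))ˣ) hzn
      rw [SubgroupClass.coe_zpow, ← hs0] at h1
      exact h1
    have hmz : ((m : ℤ)) ≠ 0 := by exact_mod_cast hmpos.ne'
    set j : ℕ := (zn % (m : ℤ)).toNat with hj
    have hjz : (j : ℤ) = zn % (m : ℤ) := Int.toNat_of_nonneg (Int.emod_nonneg zn hmz)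
    have hpowj : (θ s0) ^ j = θ t := by
      have h1 : (θ s0) ^ ((j : ℤ)) = θ t := by
        rw [hjz, hm, zpow_mod_orderOf, hzn']
      rwa [zpow_natCast] at h1
    have h2 : θ (t * (s0 ^ j)⁻¹) = 1 := by
      rw [map_mul, map_inv, map_pow]
      exact mul_inv_eq_one.mpr hpowj.symm
    have h3 := (hker _).mp h2
    refine ⟨j, ?_⟩
    rwa [show ((t * (s0 ^ j)⁻¹ : H) : L ≃ₐ[K] L) = τ * ((s0 : L ≃ₐ[K] L) ^ j)⁻¹ from rfl] at h3
  · -- p prime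
    intro hpp hdvd
    have hval : ((p : L) = 0 ∨ 0 < v ((p : L))) := by
      rcases hp with ⟨_, h⟩ | ⟨h0, _⟩
      · exact h
      · exact absurd (h0 ▸ hpp) Nat.not_prime_zero
    have hpk : ((p : (O hv) ⧸ (MI hv))) = 0 := by
      have h1 : ((p : O hv)) ∈ MI hv := by
        show ((1:ℤ) : WithTop ℤ) ≤ eV v (((p : O hv) : L))
        push_cast
        rcases eq_or_ne ((p : L)) 0 with h0 | h0
        · rw [h0, eV_zero]; exact le_top
        · have hv1 : 0 < v ((p : L)) := hval.resolve_left h0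
          rw [eV_of_ne h0]
          exact_mod_cast (by omega : (1:ℤ) ≤ v ((p:L)))
      have h2 : ((p : (O hv) ⧸ (MI hv))) = Ideal.Quotient.mk (MI hv) ((p : O hv)) :=
        (map_natCast (Ideal.Quotient.mk (MI hv)) p).symm
      rw [h2]
      exact Ideal.Quotient.eq_zero_iff_mem.mpr h1
    haveI : CharP ((O hv) ⧸ (MI hv)) p := by
      have h1 : ringChar ((O hv) ⧸ (MI hv)) ∣ p := ringChar.dvd hpk
      rcases (Nat.Prime.eq_one_or_self_of_dvd hpp _ h1) with h | h
      · exact absurd h (CharP.ringChar_ne_one)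
      · exact ringChar.of_eq h
    haveI : Fact p.Prime := ⟨hpp⟩
    set a : ((O hv) ⧸ (MI hv))ˣ := (θ s0) ^ (m / p) with ha
    have hdiv0 : m / p ≠ 0 :=
      (Nat.div_pos (Nat.le_of_dvd hmpos hdvd) hpp.pos).ne'
    have horda : orderOf a = p := by
      rw [ha, orderOf_pow' _ hdiv0, ← hm,
        Nat.gcd_eq_right (Nat.div_dvd_of_dvd hdvd), Nat.div_div_self hdvd hmpos.ne']
    have ha1 : a ≠ 1 := by
      intro h
      rw [h, orderOf_one] at horda
      exact hpp.one_lt.ne horda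
    have hap : a ^ p = 1 := by rw [← horda, pow_orderOf_eq_one]
    have hbp : ((a : (O hv) ⧸ (MI hv))) ^ p = 1 := by
      rw [← Units.val_pow_eq_pow_val, hap, Units.val_one]
    have hsub : ((a : (O hv) ⧸ (MI hv)) - 1) ^ p = 0 := by
      rw [sub_pow_char, hbp, one_pow, sub_self]
    have hb1 : (a : (O hv) ⧸ (MI hv)) = 1 :=
      sub_eq_zero.mp ((pow_eq_zero_iff hpp.ne_zero).mp hsub)
    exact ha1 (Units.ext hb1)
  · -- p = 0
    intro hp0 τ hτ
    rcases hp with ⟨hpp, _⟩ | ⟨_, hall⟩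
    · exact absurd (hp0 ▸ hpp) Nat.not_prime_zero
    · exact wild_eq_one hv hπ0 hπ1 hall hτ
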